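/- Let G be a connected graph with a cut vertex v, and let H be a connected component of G − v such that the induced subgraph G[V(H) ∪ {v}] is biconnected with at most d vertices and belongs to a block-hereditary class P. Then for every k ≥ 0: G has a set S of at most k vertices such that every block of G − S with an edge is in P and has at most d vertices, if and only if the graph G − V(H) has such a set of at most k vertices. -/

import Mathlib

open SimpleGraph

def PreconnOn {V : Type} (G : SimpleGraph V) (B : Set V) : Prop :=
  (G.induce B).Preconnected

def ConnOn {V : Type} (G : SimpleGraph V) (B : Set V) : Prop :=
  (G.induce B).Connected

def BiconnOn {V : Type} (G : SimpleGraph V) (B : Set V) : Prop :=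
  ConnOn G B ∧ ∀ v ∈ B, PreconnOn G (B \ {v})

/-- `B` is a block of the induced subgraph `G[W]`. -/
def IsBlockIn {V : Type} (G : SimpleGraph V) (W B : Set V) : Prop :=
  B ⊆ W ∧ BiconnOn G B ∧ ∀ C : Set V, B ⊆ C → C ⊆ W → BiconnOn G C → C = B

def HasEdgeIn {V : Type} (G : SimpleGraph V) (B : Set V) : Prop :=
  ∃ u ∈ B, ∃ v ∈ B, G.Adj u v


lemma exists_maximal_block {V : Type} [Fintype V] (G : SimpleGraph V)
    (W B : Set V) (hBW : B ⊆ W) (hB : BiconnOn G B) :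
    ∃ B', B ⊆ B' ∧ IsBlockIn G W B' := by
  classical
  have hfin : ({C : Set V | B ⊆ C ∧ C ⊆ W ∧ BiconnOn G C}).Finite := Set.toFinite _
  obtain ⟨C, hC, hmax⟩ := Set.Finite.exists_maximal hfin ⟨B, subset_rfl, hBW, hB⟩
  exact ⟨C, hC.1, hC.2.1, hC.2.2,
    fun D hCD hDW hD => Set.Subset.antisymm (hmax ⟨hC.1.trans hCD, hDW, hD⟩ hCD) hCD⟩

lemma walk_stay {V : Type} (G : SimpleGraph V) (H : Set V) (v : V)
    (hHcomp : ∀ u ∈ H, ∀ w : V, w ≠ v → G.Adj u w → w ∈ H)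
    (T : Set V) (hT : v ∉ T) (x y : T)
    (hr : (G.induce T).Reachable x y) (hx : (x : V) ∈ H) : (y : V) ∈ H := by
  obtain ⟨p⟩ := hr
  induction p with
  | nil => exact hx
  | @cons a b c h q ih =>
    have hb : (b : V) ∈ H := by
      refine hHcomp a hx b (fun e => hT ?_) h
      exact e ▸ b.2
    exact ih hb

lemma bicomp_sub {V : Type} (G : SimpleGraph V) (H : Set V) (v : V) (hvH : v ∉ H)
    (hHcomp : ∀ u ∈ H, ∀ w : V, w ≠ v → G.Adj u w → w ∈ H)
    (B : Set V) (hB : BiconnOn G B) :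
    B ⊆ insert v H ∨ B ⊆ Hᶜ := by
  by_cases hBH : ∃ h ∈ B, h ∈ H
  · left
    obtain ⟨h, hhB, hhH⟩ := hBH
    intro w hwB
    by_cases hwv : w = v
    · exact hwv ▸ Set.mem_insert v H
    · have hpre : (G.induce (B \ {v})).Preconnected := by
        by_cases hvB : v ∈ B
        · exact hB.2 v hvB
        · rw [Set.diff_singleton_eq_self hvB]
          exact hB.1.preconnected
      have hhv : h ≠ v := fun e => hvH (e ▸ hhH)
      have hreach := hpre ⟨h, hhB, hhv⟩ ⟨w, hwB, hwv⟩
      have : v ∉ B \ {v} := fun hmem => hmem.2 rfl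
      exact Set.mem_insert_of_mem _
        (walk_stay G H v hHcomp (B \ {v}) this _ _ hreach hhH)
  · right
    intro w hw hwH
    exact hBH ⟨w, hw, hwH⟩

/-- **safeness of the Cut Vertex Rule.** Let `G` be connected with a
cut vertex `v`, and let `H` be a connected component of `G − v` such that
`G[V(H) ∪ {v}]` is biconnected, has at most `d` vertices, and lies in the
non-degenerate block-hereditary class `𝒫` (represented by the predicate `P`).  Then
for every `k ≥ 0`, `G` has a set `S` of at most `k` vertices such that every block of
`G − S` with an edge is in `𝒫` and has at most `d` vertices iff `G − V(H)` has such a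
set of at most `k` vertices. -/
theorem stmt12 {V : Type} [Fintype V] [DecidableEq V]
    (G : SimpleGraph V) (P : Set V → Prop) (d : ℕ)
    (hbicP : ∀ B : Set V, P B → BiconnOn G B)
    (hK2 : ∀ u w : V, G.Adj u w → P {u, w})
    (hbh : ∀ B : Set V, P B → ∀ A : Set V, A ⊆ B →
      ∀ C : Set V, IsBlockIn G A C → HasEdgeIn G C → P C)
    (hconn : G.Connected)
    (v : V) (hcut : ¬ PreconnOn G {u : V | u ≠ v})
    (H : Set V) (hvH : v ∉ H) (hHconn : ConnOn G H)
    (hHcomp : ∀ u ∈ H, ∀ w : V, w ≠ v → G.Adj u w → w ∈ H)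
    (hblock : BiconnOn G (insert v H))
    (hsize : (insert v H).ncard ≤ d)
    (hP : P (insert v H))
    (k : ℕ) :
    (∃ S : Set V, S.ncard ≤ k ∧
        ∀ B : Set V, IsBlockIn G Sᶜ B → HasEdgeIn G B → P B ∧ B.ncard ≤ d) ↔
      (∃ S : Set V, S ⊆ Hᶜ ∧ S.ncard ≤ k ∧
        ∀ B : Set V, IsBlockIn G (Hᶜ \ S) B → HasEdgeIn G B → P B ∧ B.ncard ≤ d) := by
  constructor
  · rintro ⟨S, hSk, hS⟩
    refine ⟨S \ H, fun x hx => hx.2, le_trans (Set.ncard_le_ncard Set.diff_subset S.toFinite) hSk, ?_⟩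
    have heq : Hᶜ \ (S \ H) = Hᶜ \ S := by
      ext x; simp only [Set.mem_diff, Set.mem_compl_iff]; tauto
    rw [heq]
    intro B hBblk hedge
    have hBS : B ⊆ Sᶜ := fun x hx => (hBblk.1 hx).2
    obtain ⟨B', hBB', hblk'⟩ := exists_maximal_block G Sᶜ B hBS hBblk.2.1
    obtain ⟨u, hu, w, hw, huw⟩ := hedge
    obtain ⟨hPB', hdB'⟩ := hS B' hblk' ⟨u, hBB' hu, w, hBB' hw, huw⟩
    refine ⟨hbh B' hPB' (B' ∩ (Hᶜ \ S)) Set.inter_subset_left B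
      ⟨Set.subset_inter hBB' hBblk.1, hBblk.2.1,
        fun C hBC hCA hC => hBblk.2.2 C hBC (hCA.trans Set.inter_subset_right) hC⟩
      ⟨u, hu, w, hw, huw⟩,
      le_trans (Set.ncard_le_ncard hBB' B'.toFinite) hdB'⟩
  · rintro ⟨S, hSH, hSk, hS⟩
    refine ⟨S, hSk, ?_⟩
    intro B hBblk hedge
    rcases bicomp_sub G H v hvH hHcomp B hBblk.2.1 with hsub | hsub
    · refine ⟨hbh (insert v H) hP ((insert v H) ∩ Sᶜ) Set.inter_subset_left B
        ⟨Set.subset_inter hsub hBblk.1, hBblk.2.1,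
          fun C hBC hCA hC => hBblk.2.2 C hBC (hCA.trans Set.inter_subset_right) hC⟩
        hedge,
        le_trans (Set.ncard_le_ncard hsub (insert v H).toFinite) hsize⟩
    · have hBsub : B ⊆ Hᶜ \ S := fun x hx => ⟨hsub hx, hBblk.1 hx⟩
      refine hS B ⟨hBsub, hBblk.2.1, fun C hBC hCW hC =>
        hBblk.2.2 C hBC (fun x hx => (hCW hx).2) hC⟩ hedge
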